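/- arXiv:math/0105098 — 3 statements merged into one kernel-verified Lean document; each statement's English description precedes it below -/
import Mathlib

section
/- For every real φ with 0 < φ < 2π, the series ∑_{k=1}^∞ sin(kφ)/k converges and its sum equals (π − φ)/2. -/
open Filter Finset Complex

theorem statement5 (φ : ℝ) (h0 : 0 < φ) (h2 : φ < 2 * Real.pi) :
    Filter.Tendsto
      (fun K : ℕ => ∑ k ∈ Finset.Icc 1 K, Real.sin (k * φ) / k)
      Filter.atTop (nhds ((Real.pi - φ) / 2)) := by
  have hπ := Real.pi_pos
  set e : ℂ := Complex.exp (φ * Complex.I) with he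
  have hnorm : ‖e‖ = 1 := by
    simp [he, Complex.norm_exp]
  have hene : e ≠ 1 := by
    intro h
    rw [he, Complex.exp_eq_one_iff] at h
    obtain ⟨n, hn⟩ := h
    have hφ' : φ = (n : ℝ) * (2 * Real.pi) := by
      have := congrArg Complex.im hn
      simpa using this
    have h1 : (0 : ℝ) < n := by nlinarith
    have h2' : (n : ℝ) < 1 := by nlinarith
    have : (0 : ℤ) < n := by exact_mod_cast h1
    have : (n : ℤ) < 1 := by exact_mod_cast h2'
    omega
  set F : ℕ → ℂ := fun n => e ^ n / n with hF
  -- Step 1: partial sums of F converge to some l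
  have hbdd : ∀ n : ℕ, ‖∑ i ∈ range n, e ^ (i + 1)‖ ≤ 2 / ‖e - 1‖ := by
    intro n
    have hne : e - 1 ≠ 0 := sub_ne_zero.mpr hene
    have : ∑ i ∈ range n, e ^ (i + 1) = e * ((e ^ n - 1) / (e - 1)) := by
      rw [← geom_sum_eq hene]
      rw [Finset.mul_sum]
      exact Finset.sum_congr rfl fun i _ => by ring
    rw [this, norm_mul, hnorm, one_mul, norm_div]
    have hb : ‖e ^ n - 1‖ ≤ 2 := by
      calc ‖e ^ n - 1‖ ≤ ‖e ^ n‖ + ‖(1 : ℂ)‖ := norm_sub_le _ _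
        _ = 2 := by rw [norm_pow, hnorm]; norm_num
    exact div_le_div_of_nonneg_right hb (norm_nonneg _)
  have hanti : Antitone (fun n : ℕ => ((n : ℝ) + 1)⁻¹) := by
    intro a b hab
    have : (a : ℝ) ≤ b := by exact_mod_cast hab
    show ((b : ℝ) + 1)⁻¹ ≤ ((a : ℝ) + 1)⁻¹
    gcongr
  have htend0 : Tendsto (fun n : ℕ => ((n : ℝ) + 1)⁻¹) atTop (nhds 0) :=
    tendsto_one_div_add_atTop_nhds_zero_nat.congr (by intro n; rw [one_div])
  have hcauchy : CauchySeq fun n => ∑ i ∈ range n, ((i : ℝ) + 1)⁻¹ • e ^ (i + 1) :=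
    hanti.cauchySeq_series_mul_of_tendsto_zero_of_bounded htend0 hbdd
  obtain ⟨l, hl⟩ := cauchySeq_tendsto_of_complete hcauchy
  have key : ∀ n : ℕ, ∑ i ∈ range (n + 1), F i
      = ∑ i ∈ range n, ((i : ℝ) + 1)⁻¹ • e ^ (i + 1) := by
    intro n
    rw [Finset.sum_range_succ']
    have h0' : F 0 = 0 := by simp [hF]
    rw [h0', add_zero]
    refine Finset.sum_congr rfl fun i _ => ?_
    rw [hF, Complex.real_smul]
    push_cast
    rw [div_eq_inv_mul]
  have hFsum : Tendsto (fun n => ∑ i ∈ range n, F i) atTop (nhds l) := by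
    rw [← tendsto_add_atTop_iff_nat 1]
    exact hl.congr fun n => (key n).symm
  -- Step 2: Abel's limit theorem identifies l
  have habel := Complex.tendsto_tsum_powerSeries_nhdsWithin_lt hFsum
  have hsφ : 0 < Real.sin (φ / 2) :=
    Real.sin_pos_of_pos_of_lt_pi (by linarith) (by linarith)
  have hid : Real.sin (φ / 2) ^ 2 + Real.cos (φ / 2) ^ 2 = 1 := Real.sin_sq_add_cos_sq _
  have hcosφ : Real.cos φ = Real.cos (φ / 2) ^ 2 - Real.sin (φ / 2) ^ 2 := by
    have h := Real.cos_two_mul' (φ / 2)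
    rwa [show 2 * (φ / 2) = φ by ring] at h
  have hsinφ : Real.sin φ = 2 * Real.sin (φ / 2) * Real.cos (φ / 2) := by
    have h := Real.sin_two_mul (φ / 2)
    rwa [show 2 * (φ / 2) = φ by ring] at h
  have hre : e.re = Real.cos φ := by rw [he]; exact Complex.exp_ofReal_mul_I_re φ
  have him' : e.im = Real.sin φ := by rw [he]; exact Complex.exp_ofReal_mul_I_im φ
  have hslit : (1 - e) ∈ Complex.slitPlane := by
    left
    rw [Complex.sub_re, Complex.one_re, hre]
    nlinarith
  have hc : ContinuousAt (fun z : ℂ => -Complex.log (1 - z * e)) 1 := by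
    have h1 : ContinuousAt (fun z : ℂ => 1 - z * e) 1 :=
      (continuous_const.sub (continuous_id.mul continuous_const)).continuousAt
    have h2 : ContinuousAt Complex.log ((fun z : ℂ => 1 - z * e) 1) := by
      show ContinuousAt Complex.log (1 - 1 * e)
      rw [one_mul]; exact continuousAt_clog hslit
    exact (ContinuousAt.comp (f := fun z : ℂ => 1 - z * e) h2 h1).neg
  have hmap : (Filter.map Complex.ofReal (nhdsWithin 1 (Set.Iio 1))) ≤ nhds (1 : ℂ) := by
    have : Tendsto Complex.ofReal (nhds (1 : ℝ)) (nhds (1 : ℂ)) := by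
      simpa using (Complex.continuous_ofReal.tendsto 1)
    exact (Filter.map_mono nhdsWithin_le_nhds).trans this
  have htends2 : Tendsto (fun z : ℂ => -Complex.log (1 - z * e))
      (Filter.map Complex.ofReal (nhdsWithin 1 (Set.Iio 1)))
      (nhds (-Complex.log (1 - e))) := by
    have := hc.tendsto
    rw [show (1 : ℂ) * e = e by ring] at this
    exact this.mono_left hmap
  have hev : ∀ᶠ z in Filter.map Complex.ofReal (nhdsWithin 1 (Set.Iio 1)),
      (∑' n, F n * z ^ n) = -Complex.log (1 - z * e) := by
    rw [Filter.eventually_map]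
    filter_upwards [Ioo_mem_nhdsLT_of_mem (Set.mem_Ioc.mpr ⟨zero_lt_one, le_refl 1⟩)] with x hx
    have hx' : ‖(x : ℂ) * e‖ < 1 := by
      rw [norm_mul, hnorm, mul_one, Complex.norm_real]
      rw [Real.norm_eq_abs, abs_lt]
      exact ⟨by linarith [hx.1], hx.2⟩
    have hs := Complex.hasSum_taylorSeries_neg_log hx'
    rw [← hs.tsum_eq]
    apply tsum_congr
    intro n
    rw [hF, mul_pow]
    ring
  have hne2 : (Filter.map Complex.ofReal (nhdsWithin 1 (Set.Iio 1))).NeBot :=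
    Filter.map_neBot
  have hleq : l = -Complex.log (1 - e) :=
    tendsto_nhds_unique (habel.congr' hev) htends2
  -- Step 3: compute the imaginary part
  have harg : (1 - e).arg = (φ - Real.pi) / 2 := by
    have hcth : Real.cos ((φ - Real.pi) / 2) = Real.sin (φ / 2) := by
      rw [show (φ - Real.pi) / 2 = φ / 2 - Real.pi / 2 by ring, Real.cos_sub]
      simp
    have hsth : Real.sin ((φ - Real.pi) / 2) = -Real.cos (φ / 2) := by
      rw [show (φ - Real.pi) / 2 = φ / 2 - Real.pi / 2 by ring, Real.sin_sub]
      simp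
    have h1e : (1 - e) = (((2 * Real.sin (φ / 2) : ℝ)) : ℂ) *
        (Complex.cos ((φ - Real.pi) / 2 : ℝ) + Complex.sin ((φ - Real.pi) / 2 : ℝ) * Complex.I) := by
      rw [← Complex.ofReal_cos, ← Complex.ofReal_sin, hcth, hsth]
      apply Complex.ext
      · simp only [Complex.sub_re, Complex.one_re, hre, Complex.mul_re, Complex.ofReal_re,
          Complex.ofReal_im, Complex.add_re, Complex.add_im, Complex.mul_im, Complex.I_re,
          Complex.I_im]
        rw [hcosφ]
        nlinarith [hid]
      · simp only [Complex.sub_im, Complex.one_im, him', Complex.mul_im, Complex.ofReal_re,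
          Complex.ofReal_im, Complex.add_re, Complex.add_im, Complex.mul_re, Complex.I_re,
          Complex.I_im]
        rw [hsinφ]
        ring
    rw [h1e]
    exact Complex.arg_mul_cos_add_sin_mul_I (by positivity)
      ⟨by linarith, by linarith⟩
  have hlim : l.im = (Real.pi - φ) / 2 := by
    rw [hleq, Complex.neg_im, Complex.log_im, harg]
    ring
  -- Step 4: relate the real partial sums to imaginary parts
  have hFim : ∀ n : ℕ, (F n).im = Real.sin (n * φ) / n := by
    intro n
    rw [hF]
    have h1 : e ^ n = Complex.exp ((((n : ℝ)) * φ : ℝ) * Complex.I) := by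
      rw [he, ← Complex.exp_nat_mul]
      push_cast
      ring_nf
    show (e ^ n / (n : ℂ)).im = Real.sin (n * φ) / n
    rw [h1, show ((n : ℕ) : ℂ) = (((n : ℝ)) : ℂ) by push_cast; ring,
      Complex.div_ofReal_im, Complex.exp_ofReal_mul_I_im]
  have himsum : ∀ K : ℕ, (∑ i ∈ range (K + 1), F i).im
      = ∑ k ∈ Finset.Icc 1 K, Real.sin (k * φ) / k := by
    intro K
    induction K with
    | zero => simp [hF]
    | succ K ih =>
      rw [Finset.sum_range_succ, Complex.add_im, ih,
        Finset.sum_Icc_succ_top (Nat.one_le_iff_ne_zero.mpr (Nat.succ_ne_zero K)), hFim]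
  have hfinal : Tendsto (fun K : ℕ => (∑ i ∈ range (K + 1), F i).im) atTop
      (nhds l.im) := by
    exact ((Complex.continuous_im.tendsto l).comp hFsum).comp (tendsto_add_atTop_nat 1)
  rw [← hlim]
  exact hfinal.congr himsum
end

section
/- Let R = ⨁_{d≥0} R_d be a commutative graded ring, j ≥ 1, and let x_1, …, x_j ∈ R be elements whose homogeneous components of degree 0 all vanish. Write y_i for the degree-1 homogeneous component of x_i. Then for every q, the degree-p homogeneous component of the elementary symmetric polynomial e_q(x_1, …, x_j) vanishes for all p < q, and its degree-q component equals e_q(y_1, …, y_j). -/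
open DirectSum

lemma mul_apply_antidiag {R : Type*} [CommRing R] (𝒜 : ℕ → Submodule ℤ R) [GradedRing 𝒜]
    (r r' : ⨁ i, 𝒜 i) (n : ℕ) :
    ((r * r') n : R) = ∑ ij ∈ Finset.HasAntidiagonal.antidiagonal n, (r ij.1 : R) * (r' ij.2 : R) := by
  classical
  rw [DirectSum.coe_mul_apply]
  refine Finset.sum_subset ?_ ?_
  · intro ij hij
    simp only [Finset.mem_filter] at hij
    simpa [Finset.HasAntidiagonal.mem_antidiagonal] using hij.2
  · intro ij hij hij2
    simp only [Finset.mem_filter, Finset.mem_product, Finset.HasAntidiagonal.mem_antidiagonal,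
      DFinsupp.mem_support_iff, not_and, not_not] at hij hij2
    by_cases h1 : r ij.1 = 0
    · simp [h1]
    · by_cases h2 : r' ij.2 = 0
      · simp [h2]
      · exact absurd (hij2 ⟨h1, h2⟩) (by simp [hij])

lemma aux {R : Type*} [CommRing R] (𝒜 : ℕ → Submodule ℤ R) [GradedRing 𝒜]
    {j : ℕ} (x : Fin j → R)
    (hx0 : ∀ i, ((DirectSum.decompose 𝒜 (x i) 0 : 𝒜 0) : R) = 0)
    (S : Finset (Fin j)) :
    (∀ p, p < S.card →
      ((DirectSum.decompose 𝒜 (∏ i ∈ S, x i) p : 𝒜 p) : R) = 0) ∧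
    ((DirectSum.decompose 𝒜 (∏ i ∈ S, x i) S.card : 𝒜 S.card) : R) =
      ∏ i ∈ S, ((DirectSum.decompose 𝒜 (x i) 1 : 𝒜 1) : R) := by
  classical
  induction S using Finset.induction with
  | empty =>
    constructor
    · intro p hp; simp at hp
    · simp only [Finset.prod_empty, Finset.card_empty]
      exact DirectSum.decompose_of_mem_same 𝒜 SetLike.GradedOne.one_mem
  | insert a S ha ih =>
    rw [Finset.prod_insert ha, Finset.prod_insert ha, Finset.card_insert_of_notMem ha]
    rw [DirectSum.decompose_mul] at *
    constructor
    · intro p hp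
      rw [mul_apply_antidiag]
      refine Finset.sum_eq_zero fun ij hij => ?_
      rw [Finset.HasAntidiagonal.mem_antidiagonal] at hij
      rcases Nat.eq_zero_or_pos ij.1 with h | h
      · rw [h, hx0 a, zero_mul]
      · have : ij.2 < S.card := by omega
        rw [ih.1 ij.2 this, mul_zero]
    · rw [mul_apply_antidiag]
      rw [Finset.sum_eq_single (1, S.card)]
      · rw [ih.2]
      · intro ij hij hne
        rw [Finset.HasAntidiagonal.mem_antidiagonal] at hij
        rcases Nat.eq_zero_or_pos ij.1 with h | h
        · rw [h, hx0 a, zero_mul]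
        · have : ij.2 < S.card := by
            rcases Nat.lt_or_ge ij.2 S.card with h2 | h2
            · exact h2
            · exfalso; apply hne
              have : ij.1 = 1 ∧ ij.2 = S.card := by omega
              exact Prod.ext this.1 this.2
          rw [ih.1 ij.2 this, mul_zero]
      · intro h
        exact absurd (Finset.HasAntidiagonal.mem_antidiagonal.2 (by omega)) h

theorem statement10 (R : Type*) [CommRing R] (𝒜 : ℕ → Submodule ℤ R) [GradedRing 𝒜]
    (j : ℕ) (hj : 1 ≤ j) (x : Fin j → R)
    (hx0 : ∀ i, ((DirectSum.decompose 𝒜 (x i) 0 : 𝒜 0) : R) = 0)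
    (q : ℕ) :
    (∀ p, p < q →
      ((DirectSum.decompose 𝒜
          (∑ S ∈ Finset.powersetCard q (Finset.univ : Finset (Fin j)), ∏ i ∈ S, x i)
          p : 𝒜 p) : R) = 0) ∧
    ((DirectSum.decompose 𝒜
        (∑ S ∈ Finset.powersetCard q (Finset.univ : Finset (Fin j)), ∏ i ∈ S, x i)
        q : 𝒜 q) : R) =
      ∑ S ∈ Finset.powersetCard q (Finset.univ : Finset (Fin j)),
        ∏ i ∈ S, ((DirectSum.decompose 𝒜 (x i) 1 : 𝒜 1) : R) := by
  rw [DirectSum.decompose_sum]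
  constructor
  · intro p hp
    rw [DFinsupp.finset_sum_apply, AddSubmonoidClass.coe_finset_sum]
    refine Finset.sum_eq_zero fun S hS => ?_
    have hcard := (Finset.mem_powersetCard.1 hS).2
    exact (aux 𝒜 x hx0 S).1 p (hcard.symm ▸ hp)
  · rw [DFinsupp.finset_sum_apply, AddSubmonoidClass.coe_finset_sum]
    refine Finset.sum_congr rfl fun S hS => ?_
    have hcard := (Finset.mem_powersetCard.1 hS).2
    have := (aux 𝒜 x hx0 S).2
    rw [hcard] at this
    exact this
end

section
/- Let V be a finite-dimensional vector space over a field K with dim V = n, and let A be an endomorphism of V. Then for every scalar c, det(A + c·id) = ∑_{q=0}^{n} c^{n−q} · tr(Λ^q A), where Λ^q A is the induced endomorphism of the q-th exterior power of V. -/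
/-- The functorial endomorphism of the `q`-th exterior power `⋀[K]^q V` induced by
an endomorphism `A` of `V`: `ExteriorAlgebra.map A` preserves the submodule `⋀[K]^q V`. -/
theorem exteriorPower_map_mem {K V : Type*} [CommRing K] [AddCommGroup V] [Module K V]
    (A : V →ₗ[K] V) (q : ℕ) : ∀ x ∈ ⋀[K]^q V, ExteriorAlgebra.map A x ∈ ⋀[K]^q V := by
  intro x hx
  have h1 : Submodule.map (ExteriorAlgebra.map A).toLinearMap (⋀[K]^q V) ≤ ⋀[K]^q V := by
    rw [Submodule.map_pow]
    have h2 : Submodule.map (ExteriorAlgebra.map A).toLinearMap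
        (LinearMap.range (ExteriorAlgebra.ι K (M := V))) ≤
        LinearMap.range (ExteriorAlgebra.ι K (M := V)) := by
      rw [ExteriorAlgebra.ι_range_map_map]
      exact Submodule.map_le_iff_le_comap.mpr fun y _ => ⟨y, rfl⟩
    exact pow_le_pow_left' h2 q
  exact h1 ⟨x, hx, rfl⟩

namespace Statement12Aux

open ExteriorAlgebra Finset Matrix

section MatrixPart

variable {K : Type*} [Field K] {n : ℕ}

lemma det_piecewise_one (M : Matrix (Fin n) (Fin n) K) (S : Finset (Fin n)) :
    Matrix.det (Matrix.of (S.piecewise (fun i => M i) (fun i => (1 : Matrix (Fin n) (Fin n) K) i)))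
      = Matrix.det (M.submatrix (Subtype.val : {x // x ∈ S} → Fin n) Subtype.val) := by
  classical
  set e : {x // x ∈ S} ⊕ {x // x ∉ S} ≃ Fin n := Equiv.sumCompl (· ∈ S)
  rw [← Matrix.det_reindex_self e.symm]
  have : (Matrix.reindex e.symm e.symm
      (Matrix.of (S.piecewise (fun i => M i) (fun i => (1 : Matrix (Fin n) (Fin n) K) i)))) =
      Matrix.fromBlocks (M.submatrix Subtype.val Subtype.val)
        (M.submatrix Subtype.val Subtype.val) 0 1 := by
    ext i j
    rcases i with i | i <;> rcases j with j | j
    · simp [e, Finset.piecewise_eq_of_mem _ _ _ i.2]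
    · simp [e, Finset.piecewise_eq_of_mem _ _ _ i.2]
    · have : (i : Fin n) ≠ (j : Fin n) := fun h => i.2 (h ▸ j.2)
      simp [e, Finset.piecewise_eq_of_notMem _ _ _ i.2, Matrix.one_apply, this]
    · simp [e, Finset.piecewise_eq_of_notMem _ _ _ i.2, Matrix.one_apply, Subtype.ext_iff]
  rw [this, Matrix.det_fromBlocks_zero₂₁, Matrix.det_one, mul_one]

lemma det_add_smul_one (M : Matrix (Fin n) (Fin n) K) (c : K) :
    Matrix.det (M + c • (1 : Matrix (Fin n) (Fin n) K)) =
      ∑ S : Finset (Fin n), c ^ (n - S.card) *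
        Matrix.det (M.submatrix (Subtype.val : {x // x ∈ S} → Fin n) Subtype.val) := by
  classical
  have h0 : Matrix.det (M + c • (1 : Matrix (Fin n) (Fin n) K)) =
      (Matrix.detRowAlternating (R := K) (n := Fin n)).toMultilinearMap
        ((fun i => M i) + fun i => (c • (1 : Matrix (Fin n) (Fin n) K)) i) := rfl
  rw [h0, MultilinearMap.map_add_univ]
  refine Finset.sum_congr rfl fun S _ => ?_
  have hpw : S.piecewise (fun i => M i) (fun i => (c • (1 : Matrix (Fin n) (Fin n) K)) i)
      = Sᶜ.piecewise (fun i => c • (S.piecewise (fun i => M i)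
          (fun i => (1 : Matrix (Fin n) (Fin n) K) i)) i)
        (S.piecewise (fun i => M i) (fun i => (1 : Matrix (Fin n) (Fin n) K) i)) := by
    ext i j
    by_cases hi : i ∈ S
    · simp [Finset.piecewise_eq_of_mem _ _ _ hi,
        Finset.piecewise_eq_of_notMem _ _ _ (by simpa using hi : i ∉ Sᶜ)]
    · simp [Finset.piecewise_eq_of_notMem _ _ _ hi,
        Finset.piecewise_eq_of_mem _ _ _ (by simpa using hi : i ∈ Sᶜ)]
  rw [hpw]
  rw [(Matrix.detRowAlternating (R := K) (n := Fin n)).toMultilinearMap.map_piecewise_smul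
    (fun _ => c) (S.piecewise (fun i => M i) (fun i => (1 : Matrix (Fin n) (Fin n) K) i)) Sᶜ]
  rw [Finset.prod_const, Finset.card_compl, Fintype.card_fin, smul_eq_mul]
  congr 1
  exact det_piecewise_one M S

end MatrixPart

section ExtPart

variable {K V : Type*} [Field K] [AddCommGroup V] [Module K V]
variable {n q : ℕ} (b : Module.Basis (Fin n) K V)

noncomputable def sOrd (s : {s : Finset (Fin n) // s.card = q}) : Fin q → Fin n :=
  fun i => (s.1.orderIsoOfFin s.2 i : Fin n)

noncomputable def phiAux (s : {s : Finset (Fin n) // s.card = q}) :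
    V [⋀^Fin q]→ₗ[K] K :=
  (Matrix.detRowAlternating (R := K) (n := Fin q)).compLinearMap
    (LinearMap.pi fun i => b.coord (sOrd s i))

lemma phiAux_apply (s : {s : Finset (Fin n) // s.card = q}) (v : Fin q → V) :
    phiAux b s v = Matrix.det (Matrix.of fun j i => b.repr (v j) (sOrd s i)) := rfl

lemma phiAux_basis (s t : {s : Finset (Fin n) // s.card = q}) :
    phiAux b s (fun i => b (sOrd t i)) = if s = t then 1 else 0 := by
  classical
  rw [phiAux_apply]
  by_cases hst : s = t
  · subst hst
    rw [if_pos rfl]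
    have : (Matrix.of fun j i => (b.repr (b (sOrd s j))) (sOrd s i)) =
        (1 : Matrix (Fin q) (Fin q) K) := by
      ext j i
      have hinj : Function.Injective (sOrd (q := q) s) :=
        fun a a' h => (s.1.orderIsoOfFin s.2).injective (Subtype.ext h)
      simp only [Matrix.of_apply, Module.Basis.repr_self, Finsupp.single_apply, Matrix.one_apply]
      by_cases h : j = i
      · simp [h]
      · rw [if_neg (fun hh => h (hinj hh)), if_neg h]
    rw [this, Matrix.det_one]
  · rw [if_neg hst]
    have hts : ¬ (t.1 : Finset (Fin n)) ⊆ s.1 := by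
      intro hsub
      exact hst (Subtype.ext ((Finset.eq_of_subset_of_card_le hsub (by rw [s.2, t.2])).symm))
    obtain ⟨a, hat, has⟩ := Finset.not_subset.mp hts
    obtain ⟨j, hj⟩ : ∃ j, sOrd t j = a := by
      obtain ⟨j, hj⟩ := (t.1.orderIsoOfFin t.2).surjective ⟨a, hat⟩
      exact ⟨j, by simp [sOrd, hj]⟩
    apply Matrix.det_eq_zero_of_row_eq_zero j
    intro i
    have : sOrd t j ≠ sOrd s i := by
      rw [hj]; exact fun h => has (h ▸ (s.1.orderIsoOfFin s.2 i).2)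
    simp [Module.Basis.repr_self, Finsupp.single_apply, this]

noncomputable def PhiAux (s : {s : Finset (Fin n) // s.card = q}) :
    ExteriorAlgebra K V →ₗ[K] K :=
  ExteriorAlgebra.liftAlternating (fun i => if h : i = q then h ▸ phiAux b s else 0)

lemma PhiAux_iMulti (s : {s : Finset (Fin n) // s.card = q}) (v : Fin q → V) :
    PhiAux b s (ιMulti K q v) = phiAux b s v := by
  rw [PhiAux, ExteriorAlgebra.liftAlternating_apply_ιMulti]
  simp

noncomputable def wFam (s : {s : Finset (Fin n) // s.card = q}) : ExteriorAlgebra K V :=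
  ιMulti K q (fun i => b (sOrd s i))

lemma PhiAux_wFam (s t : {s : Finset (Fin n) // s.card = q}) :
    PhiAux b s (wFam b t) = if s = t then 1 else 0 := by
  rw [wFam, PhiAux_iMulti, phiAux_basis]

lemma wFam_mem (s : {s : Finset (Fin n) // s.card = q}) : wFam b s ∈ ⋀[K]^q V :=
  ExteriorAlgebra.ιMulti_range K q (Set.mem_range_self _)

lemma iMulti_mem_span (v : Fin q → V) :
    ιMulti K q v ∈ Submodule.span K (Set.range (wFam (q := q) b)) := by
  classical
  have hv : ∀ j, v j = ∑ i : Fin n, b.repr (v j) i • b i := by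
    intro j
    exact (Module.Basis.sum_equivFun b (v j)).symm
  have h1 : ιMulti K q v =
      ∑ r : Fin q → Fin n, (∏ j, b.repr (v j) (r j)) • ιMulti K q (fun j => b (r j)) := by
    calc ιMulti K q v
        = (ιMulti K q).toMultilinearMap (fun j => ∑ i : Fin n, b.repr (v j) i • b i) := by
          exact congrArg _ (funext hv)
      _ = ∑ r : Fin q → Fin n, (ιMulti K q).toMultilinearMap
            (fun j => b.repr (v j) (r j) • b (r j)) := by
          rw [MultilinearMap.map_sum]
      _ = ∑ r : Fin q → Fin n, (∏ j, b.repr (v j) (r j)) • ιMulti K q (fun j => b (r j)) := by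
          refine Finset.sum_congr rfl fun r _ => ?_
          rw [MultilinearMap.map_smul_univ]
          rfl
  rw [h1]
  refine Submodule.sum_mem _ fun r _ => Submodule.smul_mem _ _ ?_
  by_cases hr : Function.Injective r
  · set s : Finset (Fin n) := Finset.image r Finset.univ with hs
    have hcard : s.card = q := by
      rw [hs, Finset.card_image_of_injective _ hr, Finset.card_univ, Fintype.card_fin]
    set t : {s : Finset (Fin n) // s.card = q} := ⟨s, hcard⟩
    have hmem : ∀ j, r j ∈ s := fun j => Finset.mem_image_of_mem r (Finset.mem_univ j)
    set e0 : Fin q → {x // x ∈ s} := fun j => ⟨r j, hmem j⟩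
    have he0 : Function.Injective e0 := fun a a' h => hr (congrArg Subtype.val h)
    have hbij : Function.Bijective e0 :=
      (Fintype.bijective_iff_injective_and_card e0).mpr ⟨he0, by simp [hcard]⟩
    set e : Fin q ≃ {x // x ∈ s} := Equiv.ofBijective e0 hbij
    set π : Equiv.Perm (Fin q) := e.trans (s.orderIsoOfFin hcard).toEquiv.symm
    have hfact : (fun j => b (r j)) = (fun i => b (sOrd t i)) ∘ π := by
      funext j
      simp only [Function.comp_apply, sOrd, π]
      congr 1
      have : (s.orderIsoOfFin hcard) ((s.orderIsoOfFin hcard).toEquiv.symm (e j)) = e j := by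
        simp
      rw [Equiv.trans_apply, this]
      rfl
    rw [hfact, AlternatingMap.map_perm]
    exact Submodule.smul_mem _ _ (Submodule.subset_span (Set.mem_range_self t))
  · rw [Function.not_injective_iff] at hr
    obtain ⟨a, a', ha, hne⟩ := hr
    have : ιMulti K q (fun j => b (r j)) = 0 :=
      AlternatingMap.map_eq_zero_of_eq _ _ (by rw [ha]) hne
    rw [this]
    exact Submodule.zero_mem _

lemma span_wFam : Submodule.span K (Set.range (wFam (q := q) b)) = ⋀[K]^q V := by
  refine le_antisymm (Submodule.span_le.mpr ?_) ?_
  · rintro x ⟨s, rfl⟩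
    exact wFam_mem b s
  · rw [← ExteriorAlgebra.ιMulti_span_fixedDegree]
    refine Submodule.span_le.mpr ?_
    rintro x ⟨v, rfl⟩
    exact iMulti_mem_span b v

noncomputable def wFam' (s : {s : Finset (Fin n) // s.card = q}) : ⋀[K]^q V :=
  ⟨wFam b s, wFam_mem b s⟩

lemma linearIndependent_wFam' : LinearIndependent K (wFam' (q := q) b) := by
  classical
  rw [Fintype.linearIndependent_iff]
  intro g hg t
  have h0 : ((∑ s, g s • wFam' (q := q) b s : ⋀[K]^q V) : ExteriorAlgebra K V) = 0 := by
    rw [hg]; rfl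
  have h1 : PhiAux b t ((∑ s, g s • wFam' (q := q) b s : ⋀[K]^q V) : ExteriorAlgebra K V)
      = g t := by
    rw [Submodule.coe_sum, map_sum]
    have : ∀ s, PhiAux b t ((g s • wFam' (q := q) b s : ⋀[K]^q V) : ExteriorAlgebra K V)
        = g s * (if t = s then 1 else 0) := by
      intro s
      rw [Submodule.coe_smul, _root_.map_smul]
      have hc : ((wFam' (q := q) b s : ⋀[K]^q V) : ExteriorAlgebra K V) = wFam b s := rfl
      rw [hc, PhiAux_wFam]
      rfl
    simp_rw [this, mul_ite, mul_one, mul_zero]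
    simp
  rw [h0, map_zero] at h1
  exact h1.symm

lemma range_wFam_eq : Set.range (wFam (q := q) b)
    = (⋀[K]^q V).subtype '' Set.range (wFam' (q := q) b) := by
  ext x
  constructor
  · rintro ⟨s, rfl⟩
    exact ⟨wFam' b s, ⟨s, rfl⟩, rfl⟩
  · rintro ⟨y, ⟨s, rfl⟩, rfl⟩
    exact ⟨s, rfl⟩

noncomputable def wBasis : Module.Basis {s : Finset (Fin n) // s.card = q} K (⋀[K]^q V) :=
  Module.Basis.mk (linearIndependent_wFam' b) (by
    intro x _
    have hx : (x : ExteriorAlgebra K V) ∈ Submodule.span K (Set.range (wFam (q := q) b)) :=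
      (span_wFam (q := q) b).symm ▸ x.2
    rw [range_wFam_eq, ← Submodule.map_span] at hx
    obtain ⟨y, hy, hyx⟩ := hx
    have : y = x := Subtype.val_injective hyx
    exact this ▸ hy)

lemma wBasis_apply (s : {s : Finset (Fin n) // s.card = q}) :
    (wBasis (q := q) b s : ExteriorAlgebra K V) = wFam b s := by
  rw [wBasis, Module.Basis.mk_apply]; rfl

lemma wBasis_coord (t : {s : Finset (Fin n) // s.card = q}) (x : ⋀[K]^q V) :
    (wBasis (q := q) b).repr x t = PhiAux b t (x : ExteriorAlgebra K V) := by
  have : ((wBasis (q := q) b).coord t : ⋀[K]^q V →ₗ[K] K)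
      = (PhiAux b t).comp (⋀[K]^q V).subtype := by
    refine Module.Basis.ext (wBasis (q := q) b) fun s => ?_
    rw [Module.Basis.coord_apply, Module.Basis.repr_self, LinearMap.comp_apply, Submodule.subtype_apply,
      wBasis_apply, PhiAux_wFam, Finsupp.single_apply]
    simp [eq_comm]
  exact congrFun (congrArg (fun f => f.toFun) this) x

lemma trace_exteriorPower_map (A : V →ₗ[K] V) :
    LinearMap.trace K (⋀[K]^q V)
        ((ExteriorAlgebra.map A).toLinearMap.restrict (exteriorPower_map_mem A q)) =
      ∑ s : {s : Finset (Fin n) // s.card = q},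
        Matrix.det ((LinearMap.toMatrix b b A).submatrix (sOrd s) (sOrd s)) := by
  classical
  rw [LinearMap.trace_eq_matrix_trace K (wBasis (q := q) b), Matrix.trace]
  refine Finset.sum_congr rfl fun s _ => ?_
  rw [Matrix.diag_apply, LinearMap.toMatrix_apply, wBasis_coord]
  have hres : (((ExteriorAlgebra.map A).toLinearMap.restrict (exteriorPower_map_mem A q))
      (wBasis (q := q) b s) : ExteriorAlgebra K V)
      = ExteriorAlgebra.map A (wBasis (q := q) b s : ExteriorAlgebra K V) := rfl
  rw [hres, wBasis_apply, wFam, ExteriorAlgebra.map_apply_ιMulti, PhiAux_iMulti, phiAux_apply,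
    ← Matrix.det_transpose]
  congr 1
  ext j i
  simp [Matrix.transpose_apply, Matrix.submatrix_apply, LinearMap.toMatrix_apply,
    Function.comp]

end ExtPart

end Statement12Aux

open Statement12Aux

/-- `det(A + c·id) = ∑_{q=0}^n c^{n-q} tr(Λ^q A)` for an endomorphism `A` of an
`n`-dimensional vector space `V`. -/
theorem statement12 (K V : Type*) [Field K] [AddCommGroup V] [Module K V]
    [FiniteDimensional K V] (n : ℕ) (hn : Module.finrank K V = n)
    (A : V →ₗ[K] V) (c : K) :
    LinearMap.det (A + c • LinearMap.id) =
      ∑ q ∈ Finset.range (n + 1), c ^ (n - q) *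
        LinearMap.trace K (⋀[K]^q V)
          ((ExteriorAlgebra.map A).toLinearMap.restrict (exteriorPower_map_mem A q)) := by
  classical
  set b : Module.Basis (Fin n) K V := Module.finBasisOfFinrankEq K V hn
  set M : Matrix (Fin n) (Fin n) K := LinearMap.toMatrix b b A with hM
  -- LHS
  have hL : LinearMap.det (A + c • LinearMap.id) =
      Matrix.det (M + c • (1 : Matrix (Fin n) (Fin n) K)) := by
    rw [← LinearMap.det_toMatrix b]
    congr 1
    rw [map_add, hM]
    congr 1
    rw [map_smul, LinearMap.toMatrix_id]
  rw [hL, det_add_smul_one]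
  -- fiberwise grouping by cardinality
  have hcard : ∀ S : Finset (Fin n), S.card ∈ Finset.range (n + 1) := by
    intro S
    rw [Finset.mem_range, Nat.lt_succ_iff]
    simpa using Finset.card_le_card (Finset.subset_univ S)
  rw [← Finset.sum_fiberwise_of_maps_to (g := fun S : Finset (Fin n) => S.card)
    (fun S _ => hcard S) (fun S => c ^ (n - S.card) *
      Matrix.det (M.submatrix (Subtype.val : {x // x ∈ S} → Fin n) Subtype.val))]
  refine Finset.sum_congr rfl fun q hq => ?_
  rw [trace_exteriorPower_map b, Finset.mul_sum]
  rw [Finset.sum_subtype (p := fun S : Finset (Fin n) => S.card = q)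
    (Finset.filter (fun S : Finset (Fin n) => S.card = q) Finset.univ)
    (fun S => by simp) (fun S => c ^ (n - S.card) *
      Matrix.det (M.submatrix (Subtype.val : {x // x ∈ S} → Fin n) Subtype.val))]
  refine Finset.sum_congr rfl fun s _ => ?_
  rw [s.2]
  congr 1
  rw [← Matrix.det_submatrix_equiv_self (s.1.orderIsoOfFin s.2).toEquiv
    (M.submatrix Subtype.val Subtype.val)]
  rfl
end
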